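/- Assume ρ = max_{t∈T} ∫_T |K(t,s)| μ(ds) < 1 and set β = max_{t₁,t₂∈T} ∫_T |K(t₁,s) K(t₂,s)| μ(ds). Then for every m ≥ 0 and every k ≥ 0, the k-fold iterate of V_K satisfies sup_{t₁,t₂∈T} |V_K^{k}[R_{m+1}](t₁,t₂)| ≤ β^{k+1} · ‖f‖²/(1 − ρ)²; consequently, for every M ≥ 1, Σ_{k=0}^{M−1} sup_{t₁,t₂} |V_K^{k}[R_{m+1}](t₁,t₂)| ≤ ‖f‖² (β + β² + ⋯ + β^M)/(1 − ρ)², which is at most β‖f‖²/((1 − β)(1 − ρ)²) when β < 1. -/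

import Mathlib

open MeasureTheory Filter
open scoped Topology BigOperators

lemma myInt {T : Type*} [MetricSpace T] [CompactSpace T] [MeasurableSpace T] [BorelSpace T]
    (μ : Measure T) [IsFiniteMeasure μ] {g : T → ℝ} (hg : Continuous g) :
    Integrable g μ := by
  have := (hg.locallyIntegrable (μ := μ)).integrableOn_isCompact isCompact_univ
  rwa [integrableOn_univ] at this

lemma myCS0 {T : Type*} [MetricSpace T] [CompactSpace T] [MeasurableSpace T] [BorelSpace T]
    (μ : Measure T) [IsProbabilityMeasure μ] {X Y : T → ℝ}
    (hX : Continuous X) (hY : Continuous Y) :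
    (∫ s, X s * Y s ∂μ) ^ 2 ≤ (∫ s, X s ^ 2 ∂μ) * (∫ s, Y s ^ 2 ∂μ) := by
  set A := ∫ s, X s ^ 2 ∂μ with hA
  set B := ∫ s, X s * Y s ∂μ with hB
  set C := ∫ s, Y s ^ 2 ∂μ with hC
  have key : ∀ t : ℝ, 0 ≤ A * (t * t) + (2 * B) * t + C := by
    intro t
    have i1 : Integrable (fun s => t ^ 2 * X s ^ 2) μ :=
      myInt μ (continuous_const.mul ((hX.pow 2)))
    have i2 : Integrable (fun s => (2 * t) * (X s * Y s)) μ :=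
      myInt μ (continuous_const.mul (hX.mul hY))
    have i3 : Integrable (fun s => Y s ^ 2) μ := myInt μ (hY.pow 2)
    have e : ∫ s, (t * X s + Y s) ^ 2 ∂μ = A * (t * t) + (2 * B) * t + C := by
      have h : (fun s => (t * X s + Y s) ^ 2)
          = fun s => t ^ 2 * X s ^ 2 + ((2 * t) * (X s * Y s) + Y s ^ 2) := by
        funext s; ring
      have i23 : Integrable (fun s => (2 * t) * (X s * Y s) + Y s ^ 2) μ := i2.add i3
      rw [h, integral_add i1 i23, integral_add i2 i3,
        integral_const_mul, integral_const_mul]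
      ring
    have h0 : 0 ≤ ∫ s, (t * X s + Y s) ^ 2 ∂μ :=
      integral_nonneg fun s => sq_nonneg _
    linarith [e ▸ h0]
  have hd := discrim_le_zero key
  rw [discrim] at hd
  nlinarith

lemma myCov {T : Type*} [MetricSpace T] [CompactSpace T] [MeasurableSpace T] [BorelSpace T]
    (μ : Measure T) [IsProbabilityMeasure μ] {X Y : T → ℝ}
    (hX : Continuous X) (hY : Continuous Y) :
    ((∫ s, X s * Y s ∂μ) - (∫ s, X s ∂μ) * (∫ s, Y s ∂μ)) ^ 2
      ≤ (∫ s, X s ^ 2 ∂μ) * (∫ s, Y s ^ 2 ∂μ) := by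
  set a := ∫ s, X s ∂μ with ha
  set b := ∫ s, Y s ∂μ with hb
  have expand : ∀ (U V : T → ℝ) (u v : ℝ), Continuous U → Continuous V →
      ∫ s, (U s - u) * (V s - v) ∂μ
        = (∫ s, U s * V s ∂μ) - u * (∫ s, V s ∂μ) - v * (∫ s, U s ∂μ) + u * v := by
    intro U V u v hU hV
    have h : (fun s => (U s - u) * (V s - v))
        = fun s => (U s * V s - u * V s - v * U s) + u * v := by funext s; ring
    have j1 : Integrable (fun s => U s * V s) μ := myInt μ (hU.mul hV)
    have j2 : Integrable (fun s => u * V s) μ := myInt μ (continuous_const.mul hV)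
    have j3 : Integrable (fun s => v * U s) μ := myInt μ (continuous_const.mul hU)
    have j12 : Integrable (fun s => U s * V s - u * V s) μ := j1.sub j2
    have j123 : Integrable (fun s => U s * V s - u * V s - v * U s) μ := j12.sub j3
    rw [h, integral_add j123 (integrable_const _), integral_sub j12 j3,
      integral_sub j1 j2, integral_const_mul, integral_const_mul, integral_const]
    simp [measure_univ]
  have h1 := myCS0 μ (X := fun s => X s - a) (Y := fun s => Y s - b) (hX.sub continuous_const : Continuous fun s => X s - a)
      (hY.sub continuous_const : Continuous fun s => Y s - b)
  have e1 : ∫ s, (X s - a) * (Y s - b) ∂μ = (∫ s, X s * Y s ∂μ) - a * b := by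
    rw [expand X Y a b hX hY]; ring
  have e2 : ∫ s, (X s - a) ^ 2 ∂μ = (∫ s, X s ^ 2 ∂μ) - a ^ 2 := by
    have h : (fun s => (X s - a) ^ 2) = fun s => (X s - a) * (X s - a) := by
      funext s; ring
    have h' : (fun s => X s ^ 2) = fun s => X s * X s := by funext s; ring
    rw [h, h', expand X X a a hX hX]; ring
  have e3 : ∫ s, (Y s - b) ^ 2 ∂μ = (∫ s, Y s ^ 2 ∂μ) - b ^ 2 := by
    have h : (fun s => (Y s - b) ^ 2) = fun s => (Y s - b) * (Y s - b) := by
      funext s; ring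
    have h' : (fun s => Y s ^ 2) = fun s => Y s * Y s := by funext s; ring
    rw [h, h', expand Y Y b b hY hY]; ring
  have n2 : 0 ≤ ∫ s, (X s - a) ^ 2 ∂μ := integral_nonneg fun s => sq_nonneg _
  have n3 : 0 ≤ ∫ s, (Y s - b) ^ 2 ∂μ := integral_nonneg fun s => sq_nonneg _
  rw [e1, e2, e3] at h1
  rw [e2] at n2; rw [e3] at n3
  nlinarith [sq_nonneg a, sq_nonneg b, mul_nonneg (sq_nonneg a) (sq_nonneg b)]

lemma myContParam {P T : Type*} [TopologicalSpace P]
    [FirstCountableTopology P]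
    [MetricSpace T] [CompactSpace T] [MeasurableSpace T] [BorelSpace T]
    (μ : Measure T) [IsFiniteMeasure μ] (F : P → T → ℝ)
    (hF : Continuous fun q : P × T => F q.1 q.2) (C : ℝ) (hC : ∀ p s, |F p s| ≤ C) :
    Continuous fun p => ∫ s, F p s ∂μ := by
  apply continuous_of_dominated (bound := fun _ => C)
  · intro p
    exact ((hF.comp (Continuous.prodMk_right p)).aestronglyMeasurable)
  · intro p
    exact Filter.Eventually.of_forall fun s => by
      simpa [Real.norm_eq_abs] using hC p s
  · exact integrable_const _
  · exact Filter.Eventually.of_forall fun s =>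
      hF.comp (continuous_id.prodMk continuous_const)

/-- If `ρ < 1` and `β = max_{t₁,t₂} ∫ |K(t₁,s)K(t₂,s)| μ(ds)`, then for every `m ≥ 0` and
`k ≥ 0` the `k`-fold iterate of `V_K` satisfies
`sup |V_K^k[R_{m+1}]| ≤ β^{k+1} ‖f‖²/(1−ρ)²`; consequently for every `M ≥ 1`,
`Σ_{k=0}^{M−1} sup |V_K^k[R_{m+1}]| ≤ ‖f‖² (β + ⋯ + β^M)/(1−ρ)²`, which is at most
`β ‖f‖²/((1−β)(1−ρ)²)` when `β < 1`. -/
theorem VK_iterates_bounds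
    {T : Type*} [MetricSpace T] [CompactSpace T] [Nonempty T]
    [MeasurableSpace T] [BorelSpace T]
    (μ : Measure T) [IsProbabilityMeasure μ] [μ.IsOpenPosMeasure]
    (K : T × T → ℝ) (hK : Continuous K)
    (f : C(T, ℝ))
    (x : ℕ → C(T, ℝ)) (hx0 : x 0 = f)
    (hxS : ∀ m t, x (m + 1) t = f t + ∫ s, K (t, s) * x m s ∂μ)
    (ρ : ℝ) (hρdef : ρ = ⨆ t : T, ∫ s, |K (t, s)| ∂μ) (hρ : ρ < 1)
    (β : ℝ) (hβdef : β = ⨆ p : T × T, ∫ s, |K (p.1, s) * K (p.2, s)| ∂μ)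
    (VK : (T × T → ℝ) → T × T → ℝ)
    (hVK : ∀ (R : T × T → ℝ) (p : T × T),
      VK R p = ∫ s, K (p.1, s) * K (p.2, s) * R (s, s) ∂μ)
    (R : ℕ → T × T → ℝ)
    (hR : ∀ (m : ℕ) (p : T × T), R (m + 1) p =
      ∫ s, K (p.1, s) * K (p.2, s) * (x m s) ^ 2 ∂μ -
        (∫ s, K (p.1, s) * x m s ∂μ) * (∫ s, K (p.2, s) * x m s ∂μ)) :
    (∀ m k : ℕ,
      (⨆ p : T × T, |VK^[k] (R (m + 1)) p|) ≤ β ^ (k + 1) * ‖f‖ ^ 2 / (1 - ρ) ^ 2) ∧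
    (∀ m M : ℕ, 1 ≤ M →
      (∑ k ∈ Finset.range M, ⨆ p : T × T, |VK^[k] (R (m + 1)) p|) ≤
        ‖f‖ ^ 2 * (∑ j ∈ Finset.Icc 1 M, β ^ j) / (1 - ρ) ^ 2) ∧
    (∀ m M : ℕ, 1 ≤ M → β < 1 →
      (∑ k ∈ Finset.range M, ⨆ p : T × T, |VK^[k] (R (m + 1)) p|) ≤
        β * ‖f‖ ^ 2 / ((1 - β) * (1 - ρ) ^ 2)) := by
  have h1ρ : (0:ℝ) < 1 - ρ := by linarith
  -- global bound on K
  set Kc : C(T × T, ℝ) := ⟨K, hK⟩ with hKc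
  have hC : ∀ p : T × T, |K p| ≤ ‖Kc‖ := fun p => by
    have h := Kc.norm_coe_le_norm p; rwa [Real.norm_eq_abs] at h
  set C := ‖Kc‖ with hCdef
  have hC0 : (0:ℝ) ≤ C := le_trans (abs_nonneg _) (hC (Classical.arbitrary (T × T)))
  -- ρ facts
  have hbddρ : BddAbove (Set.range fun t : T => ∫ s, |K (t, s)| ∂μ) := by
    refine ⟨C, ?_⟩
    rintro _ ⟨t, rfl⟩
    calc ∫ s, |K (t, s)| ∂μ ≤ ∫ _s, C ∂μ := by
          apply integral_mono (myInt μ (hK.comp (Continuous.prodMk_right t)).abs)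
            (integrable_const _)
          intro s
          dsimp only [Function.comp]
          exact hC (t, s)
      _ = C := by simp
  have hρle : ∀ t : T, ∫ s, |K (t, s)| ∂μ ≤ ρ := by
    intro t; rw [hρdef]; exact le_ciSup hbddρ t
  have hρ0 : 0 ≤ ρ := le_trans (integral_nonneg fun s => abs_nonneg _)
    (hρle (Classical.arbitrary T))
  -- β facts
  have hbddβ : BddAbove (Set.range fun p : T × T => ∫ s, |K (p.1, s) * K (p.2, s)| ∂μ) := by
    refine ⟨C * C, ?_⟩
    rintro _ ⟨p, rfl⟩
    calc ∫ s, |K (p.1, s) * K (p.2, s)| ∂μ ≤ ∫ _s, C * C ∂μ := by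
          apply integral_mono
            (myInt μ (((hK.comp (Continuous.prodMk_right p.1)).mul
              (hK.comp (Continuous.prodMk_right p.2))).abs)) (integrable_const _)
          intro s
          dsimp only [Function.comp, Pi.mul_apply, Pi.pow_apply]
          rw [abs_mul]
          exact mul_le_mul (hC (p.1, s)) (hC (p.2, s)) (abs_nonneg _)
            (le_trans (abs_nonneg _) (hC (p.1, s)))
      _ = C * C := by simp
  have hβle : ∀ p : T × T, ∫ s, |K (p.1, s) * K (p.2, s)| ∂μ ≤ β := by
    intro p; rw [hβdef]; exact le_ciSup hbddβ p
  have hβ0 : 0 ≤ β := le_trans (integral_nonneg fun s => abs_nonneg _)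
    (hβle (Classical.arbitrary (T × T)))
  set N := ‖f‖ / (1 - ρ) with hN
  have hfN : ‖f‖ ≤ N := by
    rw [hN, le_div_iff₀ h1ρ]; nlinarith [norm_nonneg f]
  have hN0 : 0 ≤ N := le_trans (norm_nonneg f) hfN
  -- uniform bound on the iterates x m
  have hxb : ∀ m t, |x m t| ≤ N := by
    intro m
    induction m with
    | zero =>
      intro t
      rw [hx0]
      exact le_trans (by simpa [Real.norm_eq_abs] using f.norm_coe_le_norm t) hfN
    | succ m ih =>
      intro t
      rw [hxS m t]
      have h2 : |∫ s, K (t, s) * x m s ∂μ| ≤ ρ * N := by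
        calc |∫ s, K (t, s) * x m s ∂μ| ≤ ∫ s, |K (t, s)| * |x m s| ∂μ := by
              simpa [Real.norm_eq_abs, abs_mul] using
                norm_integral_le_integral_norm (fun s => K (t, s) * x m s) (μ := μ)
          _ ≤ ∫ s, |K (t, s)| * N ∂μ := by
              apply integral_mono
                (myInt μ ((hK.comp (Continuous.prodMk_right t)).abs.mul (x m).continuous.abs))
                (myInt μ ((hK.comp (Continuous.prodMk_right t)).abs.mul continuous_const))
              intro s
              dsimp only [Function.comp]
              exact mul_le_mul_of_nonneg_left (ih s) (abs_nonneg _)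
          _ = (∫ s, |K (t, s)| ∂μ) * N := by rw [integral_mul_const]
          _ ≤ ρ * N := mul_le_mul_of_nonneg_right (hρle t) hN0
      have h1 : |f t| ≤ ‖f‖ := by simpa [Real.norm_eq_abs] using f.norm_coe_le_norm t
      have : (1 - ρ) * N = ‖f‖ := by rw [hN]; field_simp
      calc |f t + ∫ s, K (t, s) * x m s ∂μ| ≤ |f t| + |∫ s, K (t, s) * x m s ∂μ| :=
            abs_add_le _ _
        _ ≤ ‖f‖ + ρ * N := add_le_add h1 h2
        _ ≤ N := by nlinarith
  -- bound on R (m+1)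
  have hRb : ∀ m p, |R (m + 1) p| ≤ β * N ^ 2 := by
    intro m p
    have hX : Continuous fun s => K (p.1, s) * x m s :=
      (hK.comp (Continuous.prodMk_right p.1)).mul (x m).continuous
    have hY : Continuous fun s => K (p.2, s) * x m s :=
      (hK.comp (Continuous.prodMk_right p.2)).mul (x m).continuous
    have hcov := myCov μ hX hY
    have hXsq : ∫ s, (K (p.1, s) * x m s) ^ 2 ∂μ ≤ β * N ^ 2 := by
      calc ∫ s, (K (p.1, s) * x m s) ^ 2 ∂μ
          ≤ ∫ s, |K (p.1, s) * K (p.1, s)| * N ^ 2 ∂μ := by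
            apply integral_mono (myInt μ (hX.pow 2))
              (myInt μ (((hK.comp (Continuous.prodMk_right p.1)).mul
                (hK.comp (Continuous.prodMk_right p.1))).abs.mul continuous_const))
            intro s
            dsimp only [Function.comp, Pi.mul_apply, Pi.pow_apply]
            have h1 : (K (p.1, s) * x m s) ^ 2 = K (p.1, s) ^ 2 * (x m s) ^ 2 := by ring
            have h2 : |K (p.1, s) * K (p.1, s)| = K (p.1, s) ^ 2 := by
              rw [abs_mul, abs_mul_abs_self]; ring
            rw [h1, h2]
            exact mul_le_mul_of_nonneg_left
              (by nlinarith [hxb m s, abs_nonneg (x m s), sq_abs (x m s)])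
              (sq_nonneg _)
        _ = (∫ s, |K (p.1, s) * K (p.1, s)| ∂μ) * N ^ 2 := by rw [integral_mul_const]
        _ ≤ β * N ^ 2 := mul_le_mul_of_nonneg_right (hβle (p.1, p.1)) (sq_nonneg _)
    have hYsq : ∫ s, (K (p.2, s) * x m s) ^ 2 ∂μ ≤ β * N ^ 2 := by
      calc ∫ s, (K (p.2, s) * x m s) ^ 2 ∂μ
          ≤ ∫ s, |K (p.2, s) * K (p.2, s)| * N ^ 2 ∂μ := by
            apply integral_mono (myInt μ (hY.pow 2))
              (myInt μ (((hK.comp (Continuous.prodMk_right p.2)).mul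
                (hK.comp (Continuous.prodMk_right p.2))).abs.mul continuous_const))
            intro s
            dsimp only [Function.comp, Pi.mul_apply, Pi.pow_apply]
            have h1 : (K (p.2, s) * x m s) ^ 2 = K (p.2, s) ^ 2 * (x m s) ^ 2 := by ring
            have h2 : |K (p.2, s) * K (p.2, s)| = K (p.2, s) ^ 2 := by
              rw [abs_mul, abs_mul_abs_self]; ring
            rw [h1, h2]
            exact mul_le_mul_of_nonneg_left
              (by nlinarith [hxb m s, abs_nonneg (x m s), sq_abs (x m s)])
              (sq_nonneg _)
        _ = (∫ s, |K (p.2, s) * K (p.2, s)| ∂μ) * N ^ 2 := by rw [integral_mul_const]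
        _ ≤ β * N ^ 2 := mul_le_mul_of_nonneg_right (hβle (p.2, p.2)) (sq_nonneg _)
    have e : R (m + 1) p = (∫ s, (K (p.1, s) * x m s) * (K (p.2, s) * x m s) ∂μ)
        - (∫ s, K (p.1, s) * x m s ∂μ) * (∫ s, K (p.2, s) * x m s ∂μ) := by
      rw [hR m p]
      congr 1
      apply integral_congr_ae
      filter_upwards with s
      ring
    have hXsq0 : 0 ≤ ∫ s, (K (p.1, s) * x m s) ^ 2 ∂μ :=
      integral_nonneg fun s => sq_nonneg _
    have hYsq0 : 0 ≤ ∫ s, (K (p.2, s) * x m s) ^ 2 ∂μ :=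
      integral_nonneg fun s => sq_nonneg _
    have hsq : (R (m + 1) p) ^ 2 ≤ (β * N ^ 2) ^ 2 := by
      rw [e]
      calc ((∫ s, (K (p.1, s) * x m s) * (K (p.2, s) * x m s) ∂μ)
          - (∫ s, K (p.1, s) * x m s ∂μ) * (∫ s, K (p.2, s) * x m s ∂μ)) ^ 2
          ≤ (∫ s, (K (p.1, s) * x m s) ^ 2 ∂μ) * (∫ s, (K (p.2, s) * x m s) ^ 2 ∂μ) :=
            hcov
        _ ≤ (β * N ^ 2) ^ 2 := by nlinarith
    calc |R (m + 1) p| = Real.sqrt ((R (m + 1) p) ^ 2) := (Real.sqrt_sq_eq_abs _).symm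
      _ ≤ Real.sqrt ((β * N ^ 2) ^ 2) := Real.sqrt_le_sqrt hsq
      _ = β * N ^ 2 := Real.sqrt_sq (by positivity)
  -- continuity of R (m+1)
  have hRcont : ∀ m, Continuous (R (m + 1)) := by
    intro m
    have e : R (m + 1) = fun p : T × T =>
        (∫ s, K (p.1, s) * K (p.2, s) * (x m s) ^ 2 ∂μ)
          - (∫ s, K (p.1, s) * x m s ∂μ) * (∫ s, K (p.2, s) * x m s ∂μ) :=
      funext (hR m)
    rw [e]
    have c1 : Continuous fun p : T × T => ∫ s, K (p.1, s) * K (p.2, s) * (x m s) ^ 2 ∂μ := by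
      apply myContParam μ (fun p : T × T => fun s => K (p.1, s) * K (p.2, s) * (x m s) ^ 2)
        (by
          apply Continuous.mul
          apply Continuous.mul
          · exact hK.comp ((continuous_fst.comp continuous_fst).prodMk continuous_snd)
          · exact hK.comp ((continuous_snd.comp continuous_fst).prodMk continuous_snd)
          · exact ((x m).continuous.comp continuous_snd).pow 2)
        (C * C * N ^ 2)
      intro p s
      rw [abs_mul, abs_mul]
      have h3 : |(x m s) ^ 2| ≤ N ^ 2 := by
        rw [abs_pow]; exact pow_le_pow_left₀ (abs_nonneg _) (hxb m s) 2
      exact mul_le_mul (mul_le_mul (hC _) (hC _) (abs_nonneg _) hC0) h3 (abs_nonneg _)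
        (mul_nonneg hC0 hC0)
    have c2 : Continuous fun t : T => ∫ s, K (t, s) * x m s ∂μ := by
      apply myContParam μ (fun t : T => fun s => K (t, s) * x m s)
        (hK.mul ((x m).continuous.comp continuous_snd)) (C * N)
      intro t s
      rw [abs_mul]
      have := hC (t, s); have := hxb m s
      have := abs_nonneg (K (t, s)); have := abs_nonneg (x m s)
      nlinarith
    exact c1.sub ((c2.comp continuous_fst).mul (c2.comp continuous_snd))
  -- the key one-step estimate for VK
  have step : ∀ (S : T × T → ℝ), Continuous S → ∀ D : ℝ, 0 ≤ D → (∀ p, |S p| ≤ D) →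
      Continuous (VK S) ∧ ∀ p, |VK S p| ≤ β * D := by
    intro S hS D hD0 hSD
    have eS : VK S = fun p : T × T => ∫ s, K (p.1, s) * K (p.2, s) * S (s, s) ∂μ :=
      funext (hVK S)
    constructor
    · rw [eS]
      apply myContParam μ (fun p : T × T => fun s => K (p.1, s) * K (p.2, s) * S (s, s))
        (by
          apply Continuous.mul
          apply Continuous.mul
          · exact hK.comp ((continuous_fst.comp continuous_fst).prodMk continuous_snd)
          · exact hK.comp ((continuous_snd.comp continuous_fst).prodMk continuous_snd)
          · exact hS.comp (continuous_snd.prodMk continuous_snd))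
        (C * C * D)
      intro p s
      rw [abs_mul, abs_mul]
      exact mul_le_mul (mul_le_mul (hC _) (hC _) (abs_nonneg _) hC0) (hSD (s, s))
        (abs_nonneg _) (mul_nonneg hC0 hC0)
    · intro p
      rw [hVK S p]
      have hcont1 : Continuous fun s => K (p.1, s) * K (p.2, s) * S (s, s) :=
        ((hK.comp (Continuous.prodMk_right p.1)).mul (hK.comp (Continuous.prodMk_right p.2))).mul
          (hS.comp (continuous_id.prodMk continuous_id))
      calc |∫ s, K (p.1, s) * K (p.2, s) * S (s, s) ∂μ|
          ≤ ∫ s, |K (p.1, s) * K (p.2, s) * S (s, s)| ∂μ := by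
            have := norm_integral_le_integral_norm
              (fun s => K (p.1, s) * K (p.2, s) * S (s, s)) (μ := μ)
            simpa only [Real.norm_eq_abs] using this
        _ ≤ ∫ s, |K (p.1, s) * K (p.2, s)| * D ∂μ := by
            apply integral_mono (myInt μ hcont1.abs)
              (myInt μ (((hK.comp (Continuous.prodMk_right p.1)).mul
                (hK.comp (Continuous.prodMk_right p.2))).abs.mul continuous_const))
            intro s
            dsimp only [Function.comp]
            rw [abs_mul]
            exact mul_le_mul_of_nonneg_left (hSD (s, s)) (abs_nonneg _)
        _ = (∫ s, |K (p.1, s) * K (p.2, s)| ∂μ) * D := by rw [integral_mul_const]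
        _ ≤ β * D := mul_le_mul_of_nonneg_right (hβle p) hD0
  -- main induction
  have main : ∀ m k, Continuous (VK^[k] (R (m + 1))) ∧
      ∀ p, |VK^[k] (R (m + 1)) p| ≤ β ^ k * (β * N ^ 2) := by
    intro m k
    induction k with
    | zero => exact ⟨hRcont m, fun p => by simpa using hRb m p⟩
    | succ k ih =>
      have hD0 : (0:ℝ) ≤ β ^ k * (β * N ^ 2) := by positivity
      have := step (VK^[k] (R (m + 1))) ih.1 (β ^ k * (β * N ^ 2)) hD0 ih.2
      refine ⟨?_, ?_⟩
      · rw [Function.iterate_succ_apply']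
        exact this.1
      · intro p
        rw [Function.iterate_succ_apply']
        calc |VK (VK^[k] (R (m + 1))) p| ≤ β * (β ^ k * (β * N ^ 2)) := this.2 p
          _ = β ^ (k + 1) * (β * N ^ 2) := by ring
  -- conclusion 1
  have goal1 : ∀ m k : ℕ,
      (⨆ p : T × T, |VK^[k] (R (m + 1)) p|) ≤ β ^ (k + 1) * ‖f‖ ^ 2 / (1 - ρ) ^ 2 := by
    intro m k
    apply ciSup_le
    intro p
    calc |VK^[k] (R (m + 1)) p| ≤ β ^ k * (β * N ^ 2) := (main m k).2 p
      _ = β ^ (k + 1) * ‖f‖ ^ 2 / (1 - ρ) ^ 2 := by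
        rw [hN, div_pow]
        field_simp
        ring
  refine ⟨goal1, ?_, ?_⟩
  · intro m M _hM
    calc (∑ k ∈ Finset.range M, ⨆ p : T × T, |VK^[k] (R (m + 1)) p|)
        ≤ ∑ k ∈ Finset.range M, β ^ (k + 1) * ‖f‖ ^ 2 / (1 - ρ) ^ 2 :=
          Finset.sum_le_sum fun k _ => goal1 m k
      _ = ‖f‖ ^ 2 * (∑ j ∈ Finset.Icc 1 M, β ^ j) / (1 - ρ) ^ 2 := by
        rw [← Finset.Ico_add_one_right_eq_Icc, Finset.sum_Ico_eq_sum_range]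
        simp only [Nat.add_sub_cancel]
        rw [Finset.mul_sum, Finset.sum_div]
        apply Finset.sum_congr rfl
        intro k _
        rw [add_comm 1 k]
        ring
  · intro m M hM hβ1
    have h1β : (0:ℝ) < 1 - β := by linarith
    have hSle : (∑ j ∈ Finset.Icc 1 M, β ^ j) ≤ β / (1 - β) := by
      rw [← Finset.Ico_add_one_right_eq_Icc, Finset.sum_Ico_eq_sum_range]
      simp only [Nat.add_sub_cancel]
      have : ∀ k ∈ Finset.range M, β ^ (1 + k) = β * β ^ k := by
        intro k _; rw [add_comm, pow_succ]; ring
      rw [Finset.sum_congr rfl this, ← Finset.mul_sum]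
      have hgeom : (∑ k ∈ Finset.range M, β ^ k) ≤ (1 - β)⁻¹ := by
        have hsum : (∑ k ∈ Finset.range M, β ^ k) ≤ ∑' k : ℕ, β ^ k :=
          Summable.sum_le_tsum (Finset.range M) (fun k _ => pow_nonneg hβ0 k)
            (summable_geometric_of_lt_one hβ0 hβ1)
        rwa [tsum_geometric_of_lt_one hβ0 hβ1] at hsum
      calc β * ∑ k ∈ Finset.range M, β ^ k ≤ β * (1 - β)⁻¹ :=
            mul_le_mul_of_nonneg_left hgeom hβ0
        _ = β / (1 - β) := by rw [div_eq_mul_inv]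
    calc (∑ k ∈ Finset.range M, ⨆ p : T × T, |VK^[k] (R (m + 1)) p|)
        ≤ ‖f‖ ^ 2 * (∑ j ∈ Finset.Icc 1 M, β ^ j) / (1 - ρ) ^ 2 := by
          have := goal1
          exact (by
            calc (∑ k ∈ Finset.range M, ⨆ p : T × T, |VK^[k] (R (m + 1)) p|)
                ≤ ∑ k ∈ Finset.range M, β ^ (k + 1) * ‖f‖ ^ 2 / (1 - ρ) ^ 2 :=
                  Finset.sum_le_sum fun k _ => goal1 m k
              _ = ‖f‖ ^ 2 * (∑ j ∈ Finset.Icc 1 M, β ^ j) / (1 - ρ) ^ 2 := by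
                rw [← Finset.Ico_add_one_right_eq_Icc, Finset.sum_Ico_eq_sum_range]
                simp only [Nat.add_sub_cancel]
                rw [Finset.mul_sum, Finset.sum_div]
                apply Finset.sum_congr rfl
                intro k _
                rw [add_comm 1 k]
                ring)
      _ ≤ β * ‖f‖ ^ 2 / ((1 - β) * (1 - ρ) ^ 2) := by
          have e1 : ‖f‖ ^ 2 * (∑ j ∈ Finset.Icc 1 M, β ^ j) / (1 - ρ) ^ 2
              = (∑ j ∈ Finset.Icc 1 M, β ^ j) * (‖f‖ ^ 2 / (1 - ρ) ^ 2) := by ring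
          have e2 : β * ‖f‖ ^ 2 / ((1 - β) * (1 - ρ) ^ 2)
              = (β / (1 - β)) * (‖f‖ ^ 2 / (1 - ρ) ^ 2) := by
            field_simp
          rw [e1, e2]
          exact mul_le_mul_of_nonneg_right hSle (by positivity)
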